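/- Let P and Q be lattice polytopes in R^n with Q a Minkowski summand of P. Then the signed Minkowski difference P - Q = {x in R^n : x + Q is contained in P} is a lattice polytope, i.e. all its vertices lie in Z^n. -/

import Mathlib

open Finset Pointwise
open scoped Classical

namespace TropFact

/-- Real dot product on `Fin n → ℝ`. -/
def dotR {n : ℕ} (v x : Fin n → ℝ) : ℝ := ∑ i, v i * x i

/-- Integer dot product. -/
def dotZ {n : ℕ} (v w : Fin n → ℤ) : ℤ := ∑ i, v i * w i

/-- Coercion of an integer vector to a real vector. -/
def toR {n : ℕ} (v : Fin n → ℤ) : Fin n → ℝ := fun i => (v i : ℝ)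

/-- Translate of a set by a vector. -/
def translate {n : ℕ} (v : Fin n → ℝ) (P : Set (Fin n → ℝ)) : Set (Fin n → ℝ) :=
  (fun x => v + x) '' P

/-- A polytope is the convex hull of a nonempty finite set of points. -/
def IsPolytope {n : ℕ} (P : Set (Fin n → ℝ)) : Prop :=
  ∃ A : Finset (Fin n → ℝ), A.Nonempty ∧ P = convexHull ℝ (A : Set (Fin n → ℝ))

/-- A lattice polytope is the convex hull of a nonempty finite set of lattice points. -/
def IsLatticePolytope {n : ℕ} (P : Set (Fin n → ℝ)) : Prop :=
  ∃ A : Finset (Fin n → ℤ), A.Nonempty ∧ P = convexHull ℝ (toR '' (A : Set (Fin n → ℤ)))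

/-- Dilation of a set by a natural number. -/
def dil {n : ℕ} (c : ℕ) (P : Set (Fin n → ℝ)) : Set (Fin n → ℝ) :=
  (fun x => (c : ℝ) • x) '' P

/-- The face of `P` supported by the linear functional `⟨v, ·⟩`. -/
def faceOf {n : ℕ} (v : Fin n → ℝ) (P : Set (Fin n → ℝ)) : Set (Fin n → ℝ) :=
  {x | x ∈ P ∧ ∀ y ∈ P, dotR v y ≤ dotR v x}

/-- `F` is a face of `P`. (Taking `v = 0` shows `P` itself is a face.) -/
def IsFace {n : ℕ} (F P : Set (Fin n → ℝ)) : Prop := ∃ v, F = faceOf v P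

/-- A proper face: a face that is neither `P` itself nor a vertex (singleton). -/
def IsProperFace {n : ℕ} (F P : Set (Fin n → ℝ)) : Prop :=
  IsFace F P ∧ F ≠ P ∧ ¬ ∃ x, F = {x}

/-- An edge of `P`: a face that is a nondegenerate segment. -/
def IsEdge {n : ℕ} (e P : Set (Fin n → ℝ)) : Prop :=
  IsFace e P ∧ ∃ a b : Fin n → ℝ, a ≠ b ∧ e = segment ℝ a b

/-- The segment `e` is parallel to the vector `w`. -/
def ParallelTo {n : ℕ} (e : Set (Fin n → ℝ)) (w : Fin n → ℝ) : Prop :=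
  ∃ a b : Fin n → ℝ, a ≠ b ∧ e = segment ℝ a b ∧ ∃ t : ℝ, t ≠ 0 ∧ b - a = t • w

/-- The segment `e` is parallel to the segment `E`. -/
def ParallelSeg {n : ℕ} (e E : Set (Fin n → ℝ)) : Prop :=
  ∃ a b a' b' : Fin n → ℝ, a ≠ b ∧ a' ≠ b' ∧ e = segment ℝ a b ∧ E = segment ℝ a' b' ∧
    ∃ t : ℝ, t ≠ 0 ∧ b - a = t • (b' - a')

/-- The segment `e` is, as a vector, an integer multiple of the segment `e'`. -/
def IntMultOfEdge {n : ℕ} (e e' : Set (Fin n → ℝ)) : Prop :=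
  ∃ (a b a' b' : Fin n → ℝ) (k : ℤ), a ≠ b ∧ a' ≠ b' ∧ e = segment ℝ a b ∧
    e' = segment ℝ a' b' ∧ b - a = (k : ℝ) • (b' - a')

/-- `Q` is a Minkowski summand of `P`. -/
def IsSummand {n : ℕ} (Q P : Set (Fin n → ℝ)) : Prop :=
  ∃ R : Set (Fin n → ℝ), IsPolytope R ∧ Q + R = P

/-- Signed Minkowski difference `P - Q = {x : x + Q ⊆ P}`. -/
def mdiff {n : ℕ} (P Q : Set (Fin n → ℝ)) : Set (Fin n → ℝ) :=
  {x | translate x Q ⊆ P}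

/-- `P ≡ Q`: `P` is a `ℤⁿ`-translate of `Q`. -/
def TransEquiv {n : ℕ} (P Q : Set (Fin n → ℝ)) : Prop :=
  ∃ v : Fin n → ℤ, P = translate (toR v) Q

/-- `F ∈ 𝐍𝒮`: `F` is a lattice polytope that is a translate of an `ℕ`-Minkowski
combination of the polytopes in `𝒮`. -/
def memNSP {n : ℕ} (𝒮 : Finset (Set (Fin n → ℝ))) (F : Set (Fin n → ℝ)) : Prop :=
  IsLatticePolytope F ∧
    ∃ y : Set (Fin n → ℝ) → ℕ, TransEquiv F (∑ S ∈ 𝒮, dil (y S) S)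

/-- `F ∈ 𝐙𝒮`: `F + G ∈ 𝐍𝒮` for some `G ∈ 𝐍𝒮`. -/
def memZSP {n : ℕ} (𝒮 : Finset (Set (Fin n → ℝ))) (F : Set (Fin n → ℝ)) : Prop :=
  IsLatticePolytope F ∧ ∃ G, memNSP 𝒮 G ∧ memNSP 𝒮 (F + G)

/-- `F ∈ 𝐄𝒮`: `F + G ∈ 𝐍𝒮` for some lattice polytope `G`. -/
def memESP {n : ℕ} (𝒮 : Finset (Set (Fin n → ℝ))) (F : Set (Fin n → ℝ)) : Prop :=
  IsLatticePolytope F ∧ ∃ G, IsLatticePolytope G ∧ memNSP 𝒮 (F + G)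

/-- Dimension of a polytope: the rank of its vector span. -/
noncomputable def polyDim {n : ℕ} (P : Set (Fin n → ℝ)) : ℕ :=
  Module.finrank ℝ ↥(vectorSpan ℝ P)

/-- A primitive integer vector: the gcd of its coordinates is 1. -/
def IsPrimitive {n : ℕ} (v : Fin n → ℤ) : Prop := Finset.univ.gcd v = 1

/-- `v` is a row of the H-matrix of the polytope `P`: a primitive outer normal
vector of a facet (codimension-one face) of `P`. -/
def HRowP {n : ℕ} (P : Set (Fin n → ℝ)) (v : Fin n → ℤ) : Prop :=
  IsPrimitive v ∧ polyDim (faceOf (toR v) P) + 1 = polyDim P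

/-- `Q` is `H(P)`-representable: a Minkowski summand of a positive dilate of `P`. -/
def HRepP {n : ℕ} (P Q : Set (Fin n → ℝ)) : Prop :=
  ∃ c : ℕ, 0 < c ∧ IsSummand Q (dil c P)

/-- `b` is the `H(P)`-constant of `Q`: the coordinatewise minimal integer vector
(indexed by rows of `H(P)`) with `Q = {x : H(P) x ≤ b}`. -/
def IsBHP {n : ℕ} (P Q : Set (Fin n → ℝ))
    (b : {v : Fin n → ℤ // HRowP P v} → ℤ) : Prop :=
  (Q = {x | ∀ v : {v : Fin n → ℤ // HRowP P v}, dotR (toR v.1) x ≤ (b v : ℝ)}) ∧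
  ∀ b' : {v : Fin n → ℤ // HRowP P v} → ℤ,
    (Q = {x | ∀ v : {v : Fin n → ℤ // HRowP P v}, dotR (toR v.1) x ≤ (b' v : ℝ)}) →
    ∀ v, b v ≤ b' v

/-- The Minkowski sum of all polytopes in `𝒮`. -/
def totalSum {n : ℕ} (𝒮 : Finset (Set (Fin n → ℝ))) : Set (Fin n → ℝ) := ∑ S ∈ 𝒮, S

/-- Rows of the H-matrix of `𝒮`. -/
abbrev HRow {n : ℕ} (𝒮 : Finset (Set (Fin n → ℝ))) (v : Fin n → ℤ) : Prop :=
  HRowP (totalSum 𝒮) v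

/-- `H(𝒮)`-representability. -/
abbrev HRep {n : ℕ} (𝒮 : Finset (Set (Fin n → ℝ))) (Q : Set (Fin n → ℝ)) : Prop :=
  HRepP (totalSum 𝒮) Q

/-- `b` is the `H(𝒮)`-constant of `Q`. -/
abbrev IsBH {n : ℕ} (𝒮 : Finset (Set (Fin n → ℝ))) (Q : Set (Fin n → ℝ))
    (b : {v : Fin n → ℤ // HRowP (totalSum 𝒮) v} → ℤ) : Prop :=
  IsBHP (totalSum 𝒮) Q b

/-- `𝒮` is a basis: the vectors `B(𝒮) = {b^H(S) : S ∈ 𝒮}` are `ℤ`-linearly independent. -/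
def IsBasis {n : ℕ} (𝒮 : Finset (Set (Fin n → ℝ))) : Prop :=
  ∃ b : 𝒮 → ({v : Fin n → ℤ // HRow 𝒮 v} → ℤ),
    (∀ S : 𝒮, IsBH 𝒮 S.1 (b S)) ∧ LinearIndependent ℤ b

/-- `𝒮` is a full basis: `B(𝒮)` is a `ℤ`-basis of the subgroup generated by the
`H`-constants of all nonempty `H`-representable lattice polytopes. -/
def IsFullBasis {n : ℕ} (𝒮 : Finset (Set (Fin n → ℝ))) : Prop :=
  ∃ b : 𝒮 → ({v : Fin n → ℤ // HRow 𝒮 v} → ℤ),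
    (∀ S : 𝒮, IsBH 𝒮 S.1 (b S)) ∧ LinearIndependent ℤ b ∧
    Submodule.span ℤ (Set.range b) =
      Submodule.span ℤ {c | ∃ F : Set (Fin n → ℝ),
        F.Nonempty ∧ IsLatticePolytope F ∧ HRep 𝒮 F ∧ IsBH 𝒮 F c}

/-- `𝒮` is hierarchical: every proper face of every member lies in `𝐍𝒮`. -/
def Hierarchical {n : ℕ} (𝒮 : Finset (Set (Fin n → ℝ))) : Prop :=
  ∀ S ∈ 𝒮, ∀ F, IsProperFace F S → memNSP 𝒮 F

/-- `𝒮` is canonical: no proper face of a member is a Minkowski summand of it. -/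
def Canonical {n : ℕ} (𝒮 : Finset (Set (Fin n → ℝ))) : Prop :=
  ∀ S ∈ 𝒮, ∀ F, IsProperFace F S → ¬ IsSummand F S

/-- `𝒮` admits a positive orientation. -/
def IsPositive {n : ℕ} (𝒮 : Finset (Set (Fin n → ℝ))) : Prop :=
  ∃ τ : (Fin n → ℤ) → ℤ, ∀ v, HRow 𝒮 v →
    (τ v = 1 ∨ τ v = -1) ∧ τ (-v) = -τ v ∧
    (τ v = 1 → ∀ S ∈ 𝒮, ¬ IsProperFace (faceOf (toR (-v)) S) S)

/-- A positive basis: a hierarchical basis of lattice polytopes admitting a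
positive orientation. -/
def IsPositiveBasis {n : ℕ} (𝒮 : Finset (Set (Fin n → ℝ))) : Prop :=
  (∀ S ∈ 𝒮, IsLatticePolytope S) ∧ Hierarchical 𝒮 ∧ IsBasis 𝒮 ∧ IsPositive 𝒮

/-- A full positive basis. -/
def IsFullPositiveBasis {n : ℕ} (𝒮 : Finset (Set (Fin n → ℝ))) : Prop :=
  (∀ S ∈ 𝒮, IsLatticePolytope S) ∧ Hierarchical 𝒮 ∧ IsFullBasis 𝒮 ∧ IsPositive 𝒮

/-! ### Tropical polynomials -/

/-- A tropical polynomial: `f x = max over a in A of (c a + ⟨a, x⟩)`. -/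
def IsTropPoly {n : ℕ} (f : (Fin n → ℝ) → ℝ) : Prop :=
  ∃ (A : Finset (Fin n → ℤ)) (hA : A.Nonempty) (c : (Fin n → ℤ) → ℝ),
    ∀ x, f x = A.sup' hA fun a => c a + dotR (toR a) x

/-- The Newton polytope of `f`, via the domain of finiteness of the Legendre transform. -/
def newt {n : ℕ} (f : (Fin n → ℝ) → ℝ) : Set (Fin n → ℝ) :=
  {y | BddAbove (Set.range fun x => dotR y x - f x)}

/-- The Legendre transform `f*` of `f` (meaningful on `newt f`). -/
noncomputable def legendre {n : ℕ} (f : (Fin n → ℝ) → ℝ) (y : Fin n → ℝ) : ℝ :=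
  sSup (Set.range fun x => dotR y x - f x)

/-- The cell of the regular subdivision `Δ_f` picked out by `x`: the projection of
the face of the lower convex hull of the lifted points supported by `(x, 1)`,
i.e. the argmax of `y ↦ ⟨y, x⟩ - f*(y)` over the Newton polytope. -/
def cellAt {n : ℕ} (f : (Fin n → ℝ) → ℝ) (x : Fin n → ℝ) : Set (Fin n → ℝ) :=
  {y | y ∈ newt f ∧ dotR y x - legendre f y = f x}

/-- `σ` is a cell of the regular subdivision `Δ_f`. -/
def IsCellOf {n : ℕ} (f : (Fin n → ℝ) → ℝ) (σ : Set (Fin n → ℝ)) : Prop :=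
  ∃ x, σ = cellAt f x

/-- A unit: a tropical polynomial inducing the trivial subdivision of its Newton
polytope (some cell of `Δ_f` is all of `newt f`). -/
def IsTropUnit {n : ℕ} (f : (Fin n → ℝ) → ℝ) : Prop :=
  IsTropPoly f ∧ ∃ x, cellAt f x = newt f

/-- An `𝒮`-unit: a unit whose Newton polytope is a `ℤⁿ`-translate of a member of `𝒮`. -/
def IsSUnit {n : ℕ} (𝒮 : Finset (Set (Fin n → ℝ))) (f : (Fin n → ℝ) → ℝ) : Prop :=
  IsTropUnit f ∧ ∃ S ∈ 𝒮, TransEquiv (newt f) S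

/-- An affine function with integral linear part. -/
def AffineTerm {n : ℕ} (g : (Fin n → ℝ) → ℝ) : Prop :=
  ∃ (a : ℝ) (v : Fin n → ℤ), ∀ x, g x = a + dotR (toR v) x

/-- `f ∈ 𝐍[𝒮]`: up to an additive affine function, `f` is a finite tropical
product (= pointwise sum) of `𝒮`-units. -/
def memNS {n : ℕ} (𝒮 : Finset (Set (Fin n → ℝ))) (f : (Fin n → ℝ) → ℝ) : Prop :=
  ∃ (L : List ((Fin n → ℝ) → ℝ)) (g : (Fin n → ℝ) → ℝ),
    (∀ u ∈ L, IsSUnit 𝒮 u) ∧ AffineTerm g ∧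
    ∀ x, f x = g x + (L.map fun u => u x).sum

/-- `f ∈ 𝐙[𝒮]`: `f ⊙ g ∈ 𝐍[𝒮]` for some `g ∈ 𝐍[𝒮]`. -/
def memZS {n : ℕ} (𝒮 : Finset (Set (Fin n → ℝ))) (f : (Fin n → ℝ) → ℝ) : Prop :=
  ∃ g, memNS 𝒮 g ∧ memNS 𝒮 (fun x => f x + g x)

/-- A finite tropical product of units. -/
def ProductOfUnits {n : ℕ} (g : (Fin n → ℝ) → ℝ) : Prop :=
  ∃ L : List ((Fin n → ℝ) → ℝ), (∀ u ∈ L, IsTropUnit u) ∧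
    ∀ x, g x = (L.map fun u => u x).sum

/-- `f ∈ 𝐄[𝒮]`: `f ⊙ g ∈ 𝐍[𝒮]` for some finite tropical product of units `g`. -/
def memES {n : ℕ} (𝒮 : Finset (Set (Fin n → ℝ))) (f : (Fin n → ℝ) → ℝ) : Prop :=
  ∃ g, ProductOfUnits g ∧ memNS 𝒮 (fun x => f x + g x)

/-- Two tropical polynomials are identified when they differ by an additive affine
function. -/
def AffEquiv {n : ℕ} (g h : (Fin n → ℝ) → ℝ) : Prop :=
  ∃ (a : ℝ) (v : Fin n → ℤ), ∀ x, g x = a + dotR (toR v) x + h x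

/-- Two lists of factors agree up to reordering and additive affine functions. -/
def FactorEquiv {n : ℕ} (L L' : List ((Fin n → ℝ) → ℝ)) : Prop :=
  ∃ M, List.Perm L M ∧ List.Forall₂ AffEquiv M L'

/-- `𝐍[𝒮]` has unique factorization: any two factorizations of the same `f` into
`𝒮`-units agree up to reordering and additive affine functions. -/
def UniqueFactorizationNS {n : ℕ} (𝒮 : Finset (Set (Fin n → ℝ))) : Prop :=
  ∀ (f : (Fin n → ℝ) → ℝ) (L L' : List ((Fin n → ℝ) → ℝ))
    (g g' : (Fin n → ℝ) → ℝ),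
    (∀ u ∈ L, IsSUnit 𝒮 u) → AffineTerm g →
    (∀ x, f x = g x + (L.map fun u => u x).sum) →
    (∀ u ∈ L', IsSUnit 𝒮 u) → AffineTerm g' →
    (∀ x, f x = g' x + (L'.map fun u => u x).sum) →
    FactorEquiv L L'

/-- `𝐍[𝒮]` has local factorization: every tropical polynomial all of whose cells
of `Δ_f` lie in `𝐍𝒮` belongs to `𝐍[𝒮]`. -/
def LocalFactorizationNS {n : ℕ} (𝒮 : Finset (Set (Fin n → ℝ))) : Prop :=
  ∀ f : (Fin n → ℝ) → ℝ, IsTropPoly f →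
    (∀ σ, IsCellOf f σ → memNSP 𝒮 σ) → memNS 𝒮 f

section Aux

variable {n : ℕ}

private lemma le_on_hull {s : Set (Fin n → ℝ)} {ℓ : (Fin n → ℝ) →L[ℝ] ℝ} {M : ℝ}
    (h : ∀ a ∈ s, ℓ a ≤ M) : ∀ x ∈ convexHull ℝ s, ℓ x ≤ M := fun x hx =>
  convexHull_min h (convex_halfSpace_le ⟨map_add ℓ, map_smul ℓ⟩ M) hx

private lemma hull_argmax {s : Finset (Fin n → ℝ)} {ℓ : (Fin n → ℝ) →L[ℝ] ℝ} {M : ℝ}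
    (h : ∀ a ∈ s, ℓ a ≤ M) {x : Fin n → ℝ}
    (hx : x ∈ convexHull ℝ (s : Set (Fin n → ℝ))) (hxM : ℓ x = M) :
    x ∈ convexHull ℝ ((s.filter fun a => ℓ a = M : Finset (Fin n → ℝ)) :
      Set (Fin n → ℝ)) := by
  obtain ⟨w, hw0, hw1, hcm⟩ := Finset.mem_convexHull.1 hx
  have hxeq : ∑ y ∈ s, w y • y = x := by
    rw [← hcm, Finset.centerMass_eq_of_sum_1 _ _ hw1]; simp [id]
  have hl : ∑ y ∈ s, w y * ℓ y = M := by
    have := congrArg ℓ hxeq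
    simpa [map_sum, map_smul, smul_eq_mul, hxM] using this
  have hsum0 : ∑ y ∈ s, w y * (M - ℓ y) = 0 := by
    have : ∑ y ∈ s, w y * (M - ℓ y) = (∑ y ∈ s, w y) * M - ∑ y ∈ s, w y * ℓ y := by
      rw [Finset.sum_mul, ← Finset.sum_sub_distrib]
      exact Finset.sum_congr rfl fun y _ => by ring
    rw [this, hw1, hl]; ring
  have hzero : ∀ y ∈ s, w y ≠ 0 → ℓ y = M := by
    intro y hy hwy
    have h0 := (Finset.sum_eq_zero_iff_of_nonneg
      (fun y hy => mul_nonneg (hw0 y hy) (sub_nonneg.2 (h y hy)))).1 hsum0 y hy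
    rcases mul_eq_zero.1 h0 with h1 | h1
    · exact absurd h1 hwy
    · linarith [sub_eq_zero.1 h1]
  have hw1' : ∑ y ∈ s.filter (fun a => ℓ a = M), w y = 1 := by
    rw [Finset.sum_filter_of_ne hzero]; exact hw1
  have hxeq' : ∑ y ∈ s.filter (fun a => ℓ a = M), w y • y = x := by
    rw [Finset.sum_filter_of_ne (fun y hy hne => hzero y hy (by
      intro hw0'; exact hne (by simp [hw0'])))]
    exact hxeq
  refine Finset.mem_convexHull.2 ⟨w, fun y hy => hw0 y (Finset.filter_subset _ _ hy),
    hw1', ?_⟩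
  rw [Finset.centerMass_eq_of_sum_1 _ _ hw1']
  simpa [id] using hxeq'

private lemma hull_face {s : Finset (Fin n → ℝ)} {ℓ : (Fin n → ℝ) →L[ℝ] ℝ} {M : ℝ}
    (h : ∀ a ∈ s, ℓ a ≤ M) :
    {p ∈ convexHull ℝ (s : Set (Fin n → ℝ)) | ℓ p = M} =
      convexHull ℝ ((s.filter fun a => ℓ a = M : Finset (Fin n → ℝ)) :
        Set (Fin n → ℝ)) := by
  apply Set.Subset.antisymm
  · rintro p ⟨hp, hpM⟩
    exact hull_argmax h hp hpM
  · intro p hp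
    refine ⟨convexHull_mono (by exact_mod_cast Finset.filter_subset _ s) hp, ?_⟩
    exact convexHull_min
      (fun a ha => (Finset.mem_filter.1 (by exact_mod_cast ha)).2)
      (convex_hyperplane ⟨map_add ℓ, map_smul ℓ⟩ M) hp

private lemma face_singleton {s : Finset (Fin n → ℝ)} {ℓ : (Fin n → ℝ) →L[ℝ] ℝ}
    {x : Fin n → ℝ} (hxs : x ∈ s) (hsep : ∀ c ∈ s, c ≠ x → ℓ c < ℓ x) :
    {p ∈ convexHull ℝ (s : Set (Fin n → ℝ)) | ℓ p = ℓ x} = {x} := by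
  have hle : ∀ a ∈ s, ℓ a ≤ ℓ x := fun a ha => by
    by_cases hax : a = x
    · subst hax; exact le_rfl
    · exact (hsep a ha hax).le
  rw [hull_face hle]
  have hfil : s.filter (fun a => ℓ a = ℓ x) = {x} := by
    ext c
    simp only [Finset.mem_filter, Finset.mem_singleton]
    constructor
    · rintro ⟨hc, hcl⟩
      by_contra hcx
      exact absurd hcl (ne_of_lt (hsep c hc hcx))
    · rintro rfl; exact ⟨hxs, rfl⟩
  rw [hfil]
  simp

private lemma exists_sep {s : Finset (Fin n → ℝ)} {x : Fin n → ℝ}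
    (hx : x ∉ convexHull ℝ ((s : Set (Fin n → ℝ)) \ {x})) :
    ∃ ℓ : (Fin n → ℝ) →L[ℝ] ℝ, ∀ c ∈ s, c ≠ x → ℓ c < ℓ x := by
  obtain ⟨f, u, hfu, hux⟩ := geometric_hahn_banach_closed_point
    (convex_convexHull ℝ _)
    ((s.finite_toSet.diff (t := {x})).isCompact_convexHull ℝ).isClosed hx
  exact ⟨f, fun c hc hcx =>
    lt_trans (hfu _ (subset_convexHull ℝ _ ⟨hc, hcx⟩)) hux⟩

private lemma extreme_not_hull_diff {C : Finset (Fin n → ℝ)} {x : Fin n → ℝ}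
    (hx : x ∈ Set.extremePoints ℝ (convexHull ℝ (C : Set (Fin n → ℝ)))) :
    x ∉ convexHull ℝ ((C : Set (Fin n → ℝ)) \ {x}) := by
  have h := (convex_convexHull ℝ (C : Set (Fin n → ℝ))).mem_extremePoints_iff_mem_diff_convexHull_diff.1 hx
  intro hmem
  exact h.2 (convexHull_mono (Set.diff_subset_diff_left (subset_convexHull ℝ _)) hmem)

private lemma face_add' {Q R : Set (Fin n → ℝ)} {ℓ : (Fin n → ℝ) →L[ℝ] ℝ} {MQ MR : ℝ}
    (hQ : ∀ q ∈ Q, ℓ q ≤ MQ) (hR : ∀ r ∈ R, ℓ r ≤ MR) :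
    {p ∈ Q + R | ℓ p = MQ + MR} = {q ∈ Q | ℓ q = MQ} + {r ∈ R | ℓ r = MR} := by
  ext p
  constructor
  · rintro ⟨hp, hpl⟩
    rw [Set.mem_add] at hp
    obtain ⟨q, hq, r, hr, rfl⟩ := hp
    rw [map_add] at hpl
    have h1 := hQ q hq
    have h2 := hR r hr
    exact Set.mem_add.2 ⟨q, ⟨hq, by linarith⟩, r, ⟨hr, by linarith⟩, rfl⟩
  · intro hp
    rw [Set.mem_add] at hp
    obtain ⟨q, ⟨hq, hq2⟩, r, ⟨hr, hr2⟩, rfl⟩ := hp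
    exact ⟨Set.mem_add.2 ⟨q, hq, r, hr, rfl⟩, by rw [map_add, hq2, hr2]⟩

private lemma vertex_sub {A' B' C : Finset (Fin n → ℝ)} (hB' : B'.Nonempty)
    (hsum : convexHull ℝ (B' : Set (Fin n → ℝ)) + convexHull ℝ (C : Set (Fin n → ℝ)) =
      convexHull ℝ (A' : Set (Fin n → ℝ)))
    {x : Fin n → ℝ}
    (hx : x ∈ Set.extremePoints ℝ (convexHull ℝ (C : Set (Fin n → ℝ)))) :
    ∃ a ∈ A', ∃ b ∈ B', x = a - b := by
  have hxC : x ∈ (C : Set (Fin n → ℝ)) := extremePoints_convexHull_subset hx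
  obtain ⟨f1, hf1⟩ := exists_sep (extreme_not_hull_diff hx)
  -- max of f1 over B'
  obtain ⟨b0, hb0, hb0max⟩ := B'.exists_max_image f1 hB'
  set MQ := f1 b0 with hMQ
  set B1 := B'.filter (fun a => f1 a = MQ) with hB1
  have hb0B1 : b0 ∈ B1 := Finset.mem_filter.2 ⟨hb0, rfl⟩
  have hRle : ∀ c ∈ C, f1 c ≤ f1 x := fun c hc => by
    by_cases hcx : c = x
    · subst hcx; exact le_rfl
    · exact (hf1 c hc hcx).le
  have hQle : ∀ q ∈ convexHull ℝ (B' : Set (Fin n → ℝ)), f1 q ≤ MQ :=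
    le_on_hull (fun a ha => hb0max a ha)
  have hRhle : ∀ r ∈ convexHull ℝ (C : Set (Fin n → ℝ)), f1 r ≤ f1 x :=
    le_on_hull (fun a ha => hRle a ha)
  have hface1R : {r ∈ convexHull ℝ (C : Set (Fin n → ℝ)) | f1 r = f1 x} = {x} :=
    face_singleton hxC hf1
  have hface1Q : {q ∈ convexHull ℝ (B' : Set (Fin n → ℝ)) | f1 q = MQ} =
      convexHull ℝ (B1 : Set (Fin n → ℝ)) :=
    hull_face (fun a ha => hb0max a ha)
  -- bound f1 on A'
  have hA'le : ∀ a ∈ A', f1 a ≤ MQ + f1 x := by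
    intro a ha
    have haP : a ∈ convexHull ℝ (B' : Set (Fin n → ℝ)) +
        convexHull ℝ (C : Set (Fin n → ℝ)) := by
      rw [hsum]; exact subset_convexHull ℝ _ ha
    rw [Set.mem_add] at haP
    obtain ⟨q, hq, r, hr, rfl⟩ := haP
    rw [map_add]
    exact add_le_add (hQle q hq) (hRhle r hr)
  set A1 := A'.filter (fun a => f1 a = MQ + f1 x) with hA1
  have hconvA1 : convexHull ℝ (A1 : Set (Fin n → ℝ)) =
      convexHull ℝ (B1 : Set (Fin n → ℝ)) + {x} := by
    rw [← hull_face hA'le, ← hsum, face_add' hQle hRhle, hface1Q, hface1R]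
  -- extreme point of conv B1
  have hcompB1 : IsCompact (convexHull ℝ (B1 : Set (Fin n → ℝ))) :=
    B1.finite_toSet.isCompact_convexHull ℝ
  obtain ⟨b, hbext⟩ := hcompB1.extremePoints_nonempty
    ⟨b0, subset_convexHull ℝ _ hb0B1⟩
  have hbB1 : b ∈ (B1 : Set (Fin n → ℝ)) := extremePoints_convexHull_subset hbext
  obtain ⟨f2, hf2⟩ := exists_sep (extreme_not_hull_diff hbext)
  have hB1le : ∀ c ∈ (B1 : Set (Fin n → ℝ)), f2 c ≤ f2 b := fun c hc => by
    by_cases hcb : c = b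
    · subst hcb; exact le_rfl
    · exact (hf2 c hc hcb).le
  have hB1hle : ∀ q ∈ convexHull ℝ (B1 : Set (Fin n → ℝ)), f2 q ≤ f2 b :=
    le_on_hull hB1le
  have hxsle : ∀ r ∈ ({x} : Set (Fin n → ℝ)), f2 r ≤ f2 x := by
    rintro r rfl; exact le_rfl
  have hface2 : {p ∈ convexHull ℝ (B1 : Set (Fin n → ℝ)) + {x} | f2 p = f2 b + f2 x}
      = {b + x} := by
    rw [face_add' hB1hle hxsle, face_singleton hbB1 hf2]
    have : {r ∈ ({x} : Set (Fin n → ℝ)) | f2 r = f2 x} = {x} := by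
      apply Set.Subset.antisymm
      · rintro r ⟨hr, _⟩; exact hr
      · rintro r rfl; exact ⟨rfl, rfl⟩
    rw [this, Set.singleton_add_singleton]
  -- bound f2 on A1
  have hA1le : ∀ a ∈ A1, f2 a ≤ f2 b + f2 x := by
    intro a ha
    have : a ∈ convexHull ℝ (B1 : Set (Fin n → ℝ)) + {x} := by
      rw [← hconvA1]; exact subset_convexHull ℝ _ ha
    rw [Set.mem_add] at this
    obtain ⟨q, hq, r, hr, rfl⟩ := this
    rw [Set.mem_singleton_iff] at hr
    subst hr
    rw [map_add]
    exact add_le_add (hB1hle q hq) le_rfl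
  set A2 := A1.filter (fun a => f2 a = f2 b + f2 x) with hA2
  have hconvA2 : convexHull ℝ (A2 : Set (Fin n → ℝ)) = {b + x} := by
    rw [← hull_face hA1le, hconvA1, hface2]
  have hbxA2 : b + x ∈ convexHull ℝ (A2 : Set (Fin n → ℝ)) := by
    rw [hconvA2]; rfl
  have hA2ne : A2.Nonempty := by
    rcases A2.eq_empty_or_nonempty with hemp | hne
    · rw [hemp] at hbxA2; simp at hbxA2
    · exact hne
  obtain ⟨a2, ha2⟩ := hA2ne
  have ha2eq : a2 = b + x := by
    have : a2 ∈ convexHull ℝ (A2 : Set (Fin n → ℝ)) := subset_convexHull ℝ _ ha2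
    rw [hconvA2] at this
    exact this
  have ha2A' : a2 ∈ A' := Finset.filter_subset _ _ (Finset.filter_subset _ _ ha2)
  have hbB' : b ∈ B' := Finset.filter_subset _ _ hbB1
  exact ⟨a2, ha2A', b, hbB', by rw [ha2eq]; abel⟩

end Aux

/-- **Lemma (signed Minkowski sums, (iv)).** If `P, Q` are lattice polytopes and
`Q ≤ P`, then `P - Q` is a lattice polytope. -/
theorem stmt_8 {n : ℕ} (P Q : Set (Fin n → ℝ)) (hP : IsLatticePolytope P)
    (hQ : IsLatticePolytope Q) (h : IsSummand Q P) :
    IsLatticePolytope (mdiff P Q) := by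
  obtain ⟨A, hAne, hPdef⟩ := hP
  obtain ⟨B, hBne, hQdef⟩ := hQ
  obtain ⟨R, ⟨C, hCne, hRdef⟩, hQR⟩ := h
  set A' := A.image toR with hA'
  set B' := B.image toR with hB'
  have hPA : P = convexHull ℝ (A' : Set (Fin n → ℝ)) := by
    rw [hPdef, hA', Finset.coe_image]
  have hQB : Q = convexHull ℝ (B' : Set (Fin n → ℝ)) := by
    rw [hQdef, hB', Finset.coe_image]
  have hB'ne : B'.Nonempty := hBne.image _
  have hRconv : Convex ℝ R := by rw [hRdef]; exact convex_convexHull ℝ _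
  have hRcomp : IsCompact R := by rw [hRdef]; exact C.finite_toSet.isCompact_convexHull ℝ
  -- Step 1 : mdiff P Q = R
  have hmdiff : mdiff P Q = R := by
    apply Set.Subset.antisymm
    · intro x hx
      by_contra hxR
      obtain ⟨f, u, hfu, hux⟩ :=
        geometric_hahn_banach_closed_point hRconv hRcomp.isClosed hxR
      obtain ⟨b0, hb0, hb0max⟩ := B'.exists_max_image f hB'ne
      have hQle : ∀ q ∈ Q, f q ≤ f b0 := by
        rw [hQB]; exact le_on_hull (fun a ha => hb0max a ha)
      have hb0Q : b0 ∈ Q := by rw [hQB]; exact subset_convexHull ℝ _ hb0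
      have hxb0 : x + b0 ∈ P := hx ⟨b0, hb0Q, rfl⟩
      rw [← hQR, Set.mem_add] at hxb0
      obtain ⟨q, hq, r, hr, hqr⟩ := hxb0
      have hfeq := congrArg f hqr
      rw [map_add, map_add] at hfeq
      have h1 := hQle q hq
      have h2 := hfu r hr
      linarith
    · intro x hxR p hp
      obtain ⟨q, hq, rfl⟩ := hp
      have hmem : q + x ∈ Q + R := Set.add_mem_add hq hxR
      rw [hQR] at hmem
      simpa [add_comm q x] using hmem
  -- Step 2 : the candidate lattice generating set
  set D := (A - B).filter (fun d => toR d ∈ R) with hD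
  have hsum' : convexHull ℝ (B' : Set (Fin n → ℝ)) +
      convexHull ℝ (C : Set (Fin n → ℝ)) = convexHull ℝ (A' : Set (Fin n → ℝ)) := by
    rw [← hQB, ← hRdef, hQR, hPA]
  have hext : ∀ x ∈ R.extremePoints ℝ, x ∈ toR '' (D : Set (Fin n → ℤ)) := by
    intro x hx
    have hx' : x ∈ (convexHull ℝ (C : Set (Fin n → ℝ))).extremePoints ℝ := by
      rw [← hRdef]; exact hx
    obtain ⟨a, haA', bb, hbB', hxab⟩ := vertex_sub hB'ne hsum' hx'
    obtain ⟨α, hα, rfl⟩ := Finset.mem_image.1 haA'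
    obtain ⟨β, hβ, rfl⟩ := Finset.mem_image.1 hbB'
    have hxR : x ∈ R := hx.1
    have htoR : toR (α - β) = x := by
      rw [hxab]; funext i
      simp only [toR, Pi.sub_apply, Int.cast_sub]
    refine ⟨α - β, ?_, htoR⟩
    rw [Finset.mem_coe, hD, Finset.mem_filter]
    exact ⟨Finset.sub_mem_sub hα hβ, by rw [htoR]; exact hxR⟩
  refine ⟨D, ?_, ?_⟩
  · have hRne : R.Nonempty := by
      obtain ⟨c0, hc0⟩ := hCne
      exact ⟨c0, by rw [hRdef]; exact subset_convexHull ℝ _ hc0⟩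
    obtain ⟨e, he⟩ := hRcomp.extremePoints_nonempty hRne
    obtain ⟨d, hd, _⟩ := hext e he
    exact ⟨d, by exact_mod_cast hd⟩
  · rw [hmdiff]
    apply Set.Subset.antisymm
    · have hkm := closure_convexHull_extremePoints hRcomp hRconv
      have h1 : convexHull ℝ (R.extremePoints ℝ) ⊆
          convexHull ℝ (toR '' (D : Set (Fin n → ℤ))) :=
        convexHull_mono (fun x hx => hext x hx)
      have hclosed : IsClosed (convexHull ℝ (toR '' (D : Set (Fin n → ℤ)))) :=
        ((D.finite_toSet.image toR).isCompact_convexHull ℝ).isClosed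
      calc R = closure (convexHull ℝ (R.extremePoints ℝ)) := hkm.symm
        _ ⊆ closure (convexHull ℝ (toR '' (D : Set (Fin n → ℤ)))) := closure_mono h1
        _ = convexHull ℝ (toR '' (D : Set (Fin n → ℤ))) := hclosed.closure_eq
    · apply convexHull_min _ hRconv
      rintro _ ⟨d, hd, rfl⟩
      rw [Finset.mem_coe] at hd
      exact (Finset.mem_filter.1 hd).2
end TropFact
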